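/- Let P be a finite poset and Q a finite poset of height one (every point is minimal or maximal, and some edge exists). Let f : E(P) → Q be an order-preserving map from the induced subposet on the extremal points E(P) = L(P) ∪ U(P) of P. For x ∈ P define α(x) = f[L(P) ∩ ↓x] and β(x) = f[U(P) ∩ ↑x]. Suppose that for every x ∈ P with α(x) ∩ β(x) = ∅: if α(x) has at least 2 elements then β(x) has exactly 1 element, and if β(x) has at least 2 elements then α(x) has exactly 1 element. Then there exists an order-preserving map g : P → Q with g restricted to E(P) equal to f. -/

import Mathlib

open Set

/-- Minimal points of a poset. -/
def LSet (α : Type*) [PartialOrder α] : Set α := {x | ∀ y, y ≤ x → y = x}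

/-- Maximal points of a poset. -/
def USet (α : Type*) [PartialOrder α] : Set α := {x | ∀ y, x ≤ y → y = x}

/-- Extremal points. -/
def ESet (α : Type*) [PartialOrder α] : Set α := LSet α ∪ USet α

/-- Non-extremal (interior) points. -/
def MSet (α : Type*) [PartialOrder α] : Set α := (ESet α)ᶜ

/-- No isolated points: every point is comparable to some other point. -/
def NoIsolated (α : Type*) [PartialOrder α] : Prop := ∀ x : α, ∃ y : α, x < y ∨ y < x

/-- Height one: every point is extremal and some strict comparability exists. -/
def HeightOne (α : Type*) [PartialOrder α] : Prop :=
  (∀ x : α, x ∈ ESet α) ∧ ∃ x y : α, x < y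

/-- A 4-crown with minimal points a, b and maximal points v, w:
the comparabilities are exactly a<v, a<w, b<v, b<w. -/
def IsCrown {α : Type*} [PartialOrder α] (a b v w : α) : Prop :=
  a < v ∧ a < w ∧ b < v ∧ b < w ∧ ¬ a ≤ b ∧ ¬ b ≤ a ∧ ¬ v ≤ w ∧ ¬ w ≤ v

/-- The inner of a 4-crown: [a,v] ∩ [b,w]. -/
def crownInner {α : Type*} [PartialOrder α] (a b v w : α) : Set α :=
  {m | a ≤ m ∧ m ≤ v} ∩ {m | b ≤ m ∧ m ≤ w}

/-- An improper 4-crown contained in the extremal points E(P). -/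
def IsImproperCrownE {α : Type*} [PartialOrder α] (a b v w : α) : Prop :=
  IsCrown a b v w ∧ a ∈ ESet α ∧ b ∈ ESet α ∧ v ∈ ESet α ∧ w ∈ ESet α ∧
    (crownInner a b v w).Nonempty

/-- Inner points of improper 4-crowns contained in E(P). -/
def innerPts (α : Type*) [PartialOrder α] : Set α :=
  {m | ∃ a b v w : α, IsImproperCrownE a b v w ∧ m ∈ crownInner a b v w}

/-- Ξ(m): union of all improper 4-crowns with inner point m. -/
def Xi {α : Type*} [PartialOrder α] (m : α) : Set α :=
  (LSet α ∩ {x | x ≤ m}) ∪ (USet α ∩ {x | m ≤ x})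

/-- 4-crown bundles: maximal sets Ξ(m) with respect to inclusion. -/
def bundles (α : Type*) [PartialOrder α] : Set (Set α) :=
  {F | ∃ m ∈ innerPts α, F = Xi m ∧
    ∀ m' ∈ innerPts α, Xi m ⊆ Xi m' → Xi m' = Xi m}

/-- R is a retract of the poset on α. -/
def IsRetract (α : Type*) [PartialOrder α] (R : Set α) : Prop :=
  ∃ r : α → α, Monotone r ∧ (∀ x, r (r x) = r x) ∧ Set.range r = R

/-- C is a retract of the induced subposet on Y. -/
def IsRetractIn {α : Type*} [PartialOrder α] (Y C : Set α) : Prop :=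
  ∃ r : Y → Y, Monotone r ∧ (∀ x, r (r x) = r x) ∧
    Set.range r = {y : Y | (y : α) ∈ C}

/-- The comparability graph of the poset is connected. -/
def PosetConnected (α : Type*) [PartialOrder α] : Prop :=
  ∀ x y : α, Relation.ReflTransGen (fun u v => u ≤ v ∨ v ≤ u) x y

/-- Minimal points of an induced subposet. -/
def minIn {α : Type*} [PartialOrder α] (S : Set α) : Set α :=
  {x ∈ S | ∀ y ∈ S, y ≤ x → y = x}

/-- Maximal points of an induced subposet. -/
def maxIn {α : Type*} [PartialOrder α] (S : Set α) : Set α :=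
  {x ∈ S | ∀ y ∈ S, x ≤ y → y = x}

theorem stmt2 {α β : Type*} [Fintype α] [PartialOrder α] [Fintype β] [PartialOrder β]
    (hPiso : NoIsolated α) (hQ : HeightOne β)
    (f : α → β) (hf : ∀ x ∈ ESet α, ∀ y ∈ ESet α, x ≤ y → f x ≤ f y)
    (hcond : ∀ x : α,
      (f '' (LSet α ∩ {z | z ≤ x})) ∩ (f '' (USet α ∩ {z | x ≤ z})) = ∅ →
      (2 ≤ (f '' (LSet α ∩ {z | z ≤ x})).ncard →
        (f '' (USet α ∩ {z | x ≤ z})).ncard = 1) ∧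
      (2 ≤ (f '' (USet α ∩ {z | x ≤ z})).ncard →
        (f '' (LSet α ∩ {z | z ≤ x})).ncard = 1)) :
    ∃ g : α → β, Monotone g ∧ ∀ x ∈ ESet α, g x = f x := by
  classical
  set A : α → Set β := fun x => f '' (LSet α ∩ {z | z ≤ x}) with hAdef
  set B : α → Set β := fun x => f '' (USet α ∩ {z | x ≤ z}) with hBdef
  have hcond' : ∀ x : α, A x ∩ B x = ∅ →
      (2 ≤ (A x).ncard → (B x).ncard = 1) ∧ (2 ≤ (B x).ncard → (A x).ncard = 1) := by
    intro x h
    apply hcond x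
    simpa [hAdef, hBdef] using h
  have hAne : ∀ x : α, (A x).Nonempty := by
    intro x
    obtain ⟨m, hm, hmin⟩ : ∃ m ∈ Finset.univ.filter (· ≤ x),
        ∀ y ∈ Finset.univ.filter (· ≤ x), ¬ y < m := by
      obtain ⟨m, hm⟩ := Finset.exists_minimal (s := Finset.univ.filter (· ≤ x)) ⟨x, by simp⟩
      exact ⟨m, hm.1, fun y hy hlt => lt_irrefl _ (lt_of_lt_of_le hlt (hm.2 hy hlt.le))⟩
    simp only [Finset.mem_filter, Finset.mem_univ, true_and] at hm hmin
    refine ⟨f m, m, ⟨?_, hm⟩, rfl⟩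
    intro y hy
    by_contra hne
    exact hmin y (hy.trans hm) (lt_of_le_of_ne hy hne)
  have hBne : ∀ x : α, (B x).Nonempty := by
    intro x
    obtain ⟨m, hm, hmax⟩ : ∃ m ∈ Finset.univ.filter (x ≤ ·),
        ∀ y ∈ Finset.univ.filter (x ≤ ·), ¬ m < y := by
      obtain ⟨m, hm⟩ := Finset.exists_maximal (s := Finset.univ.filter (x ≤ ·)) ⟨x, by simp⟩
      exact ⟨m, hm.1, fun y hy hlt => lt_irrefl _ (lt_of_lt_of_le hlt (hm.2 hy hlt.le))⟩
    simp only [Finset.mem_filter, Finset.mem_univ, true_and] at hm hmax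
    refine ⟨f m, m, ⟨?_, hm⟩, rfl⟩
    intro y hy
    by_contra hne
    exact hmax y (hm.trans hy) (lt_of_le_of_ne hy fun h => hne h.symm)
  have hAB_le : ∀ x : α, ∀ p ∈ A x, ∀ q ∈ B x, p ≤ q := by
    rintro x p ⟨a, ⟨haL, hax⟩, rfl⟩ q ⟨u, ⟨huU, hxu⟩, rfl⟩
    exact hf a (Or.inl haL) u (Or.inr huU) (hax.trans hxu)
  have hAmono : ∀ {x y : α}, x ≤ y → A x ⊆ A y := by
    rintro x y hxy p ⟨a, ⟨h1, h2⟩, rfl⟩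
    exact ⟨a, ⟨h1, h2.trans hxy⟩, rfl⟩
  have hBanti : ∀ {x y : α}, x ≤ y → B y ⊆ B x := by
    rintro x y hxy p ⟨u, ⟨h1, h2⟩, rfl⟩
    exact ⟨u, ⟨h1, hxy.trans h2⟩, rfl⟩
  have hUB : ∀ x ∈ USet α, B x = {f x} := by
    intro x hx
    apply Set.Subset.antisymm
    · rintro q ⟨u, ⟨huU, hxu⟩, rfl⟩
      simp [hx u hxu]
    · intro q hq
      rw [Set.mem_singleton_iff] at hq
      exact hq ▸ ⟨x, ⟨hx, le_rfl⟩, rfl⟩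
  have hLA : ∀ x ∈ LSet α, A x = {f x} := by
    intro x hx
    apply Set.Subset.antisymm
    · rintro q ⟨a, ⟨haL, hax⟩, rfl⟩
      simp [hx a hax]
    · intro q hq
      rw [Set.mem_singleton_iff] at hq
      exact hq ▸ ⟨x, ⟨hx, le_rfl⟩, rfl⟩
  have key : ∀ x : α, ∃ v : β, (v ∈ A x ∩ B x) ∨ (A x ∩ B x = ∅ ∧
      ((x ∈ USet α ∧ v ∈ B x) ∨ (x ∉ USet α ∧ v ∈ A x ∧ (A x).ncard = 1) ∨
       (x ∉ USet α ∧ v ∈ B x ∧ 2 ≤ (A x).ncard))) := by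
    intro x
    by_cases h : (A x ∩ B x).Nonempty
    · exact ⟨h.choose, Or.inl h.choose_spec⟩
    · have he := Set.not_nonempty_iff_eq_empty.mp h
      by_cases hU : x ∈ USet α
      · exact ⟨(hBne x).choose, Or.inr ⟨he, Or.inl ⟨hU, (hBne x).choose_spec⟩⟩⟩
      · by_cases h1 : (A x).ncard = 1
        · exact ⟨(hAne x).choose, Or.inr ⟨he, Or.inr (Or.inl ⟨hU, (hAne x).choose_spec, h1⟩)⟩⟩
        · have hpos : 0 < (A x).ncard := (Set.ncard_pos (Set.toFinite _)).mpr (hAne x)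
          exact ⟨(hBne x).choose, Or.inr ⟨he, Or.inr (Or.inr
            ⟨hU, (hBne x).choose_spec, by omega⟩)⟩⟩
  choose g hg using key
  refine ⟨g, ?_, ?_⟩
  · intro x y hxy
    by_cases hxU : x ∈ USet α
    · have hyx : y = x := hxU y hxy
      rw [hyx]
    · have hxgood : g x ∈ A x ∨ (A x ∩ B x = ∅ ∧ g x ∈ B x ∧ 2 ≤ (A x).ncard) := by
        rcases hg x with hx | ⟨he, hx | hx | hx⟩
        · exact Or.inl hx.1
        · exact absurd hx.1 hxU
        · exact Or.inl hx.2.1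
        · exact Or.inr ⟨he, hx.2.1, hx.2.2⟩
      have hygood : g y ∈ B y ∨ (g y ∈ A y ∧ (A y).ncard = 1) := by
        rcases hg y with hy | ⟨he, hy | hy | hy⟩
        · exact Or.inl hy.2
        · exact Or.inl hy.2
        · exact Or.inr ⟨hy.2.1, hy.2.2⟩
        · exact Or.inl hy.2.1
      rcases hxgood with hxA | ⟨hxe, hxB, hx2⟩
      · rcases hygood with hyB | ⟨hyA, hy1⟩
        · exact hAB_le y _ (hAmono hxy hxA) _ hyB
        · obtain ⟨a, ha⟩ := Set.ncard_eq_one.mp hy1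
          have h1 : g x = a := by
            have := hAmono hxy hxA; rw [ha] at this; exact this
          have h2 : g y = a := by rw [ha] at hyA; exact hyA
          rw [h1, h2]
      · have hc := (hcond' x hxe).1 hx2
        obtain ⟨q, hq⟩ := Set.ncard_eq_one.mp hc
        have hgyB : g y ∈ B y := by
          rcases hygood with h | ⟨hyA, hy1⟩
          · exact h
          · exfalso
            have hle : (A x).ncard ≤ (A y).ncard :=
              Set.ncard_le_ncard (hAmono hxy) (Set.toFinite _)
            omega
        have h1 : g x = q := by rw [hq] at hxB; exact hxB
        have h2 : g y = q := by
          have := hBanti hxy hgyB; rw [hq] at this; exact this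
        rw [h1, h2]
  · intro x hx
    rcases hx with hxL | hxU
    · have hAx : A x = {f x} := hLA x hxL
      rcases hg x with hx' | ⟨he, hx' | hx' | hx'⟩
      · have := hx'.1; rw [hAx] at this; exact this
      · have := hx'.2; rw [hUB x hx'.1] at this; exact this
      · have := hx'.2.1; rw [hAx] at this; exact this
      · exfalso; rw [hAx] at hx'; simp [Set.ncard_singleton] at hx'
    · have hBx : B x = {f x} := hUB x hxU
      rcases hg x with hx' | ⟨he, hx' | hx' | hx'⟩
      · have := hx'.2; rw [hBx] at this; exact this
      · have := hx'.2; rw [hBx] at this; exact this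
      · exact absurd hxU hx'.1
      · exact absurd hxU hx'.1
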